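/- If A is a B_h set in {1,...,n} and m a positive integer, and B = {0, 1, ..., m−1}, then the set mA + B = {m·a + b : a ∈ A, b ∈ B} is a B_h[h!·m^{h-1}]-type set: every integer has at most h!·m^{h-1} ordered representations as a sum of h elements of mA + B. -/

import Mathlib

theorem lindstrom_dilate_plus_interval (h n m : ℕ) (hh : 1 ≤ h) (hm : 1 ≤ m)
    (A : Finset ℕ) (hsub : A ⊆ Finset.Icc 1 n)
    (hBh : ∀ s t : Multiset ℕ, Multiset.card s = h → Multiset.card t = h →
      (∀ x ∈ s, x ∈ A) → (∀ x ∈ t, x ∈ A) → s.sum = t.sum → s = t)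
    (S : Finset ℕ)
    (hSdef : S = (A ×ˢ Finset.range m).image fun p => m * p.1 + p.2) :
    ∀ k : ℕ,
      ((Fintype.piFinset fun _ : Fin h => S).filter
        fun f => (∑ i, f i) = k).card ≤ h.factorial * m ^ (h - 1) := by
  classical
  intro k
  have hm0 : 0 < m := hm
  set F := (Fintype.piFinset fun _ : Fin h => S).filter fun f => (∑ i, f i) = k with hF
  -- decomposition of elements of S
  have hdec : ∀ f ∈ F, ∀ i : Fin h, f i / m ∈ A ∧ f i = m * (f i / m) + f i % m := by
    intro f hf i
    rw [hF, Finset.mem_filter, Fintype.mem_piFinset] at hf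
    have hfi : f i ∈ S := hf.1 i
    rw [hSdef, Finset.mem_image] at hfi
    obtain ⟨⟨a, b⟩, hab, heq⟩ := hfi
    rw [Finset.mem_product, Finset.mem_range] at hab
    have hdiv : f i / m = a := by
      rw [← heq, Nat.mul_add_div hm0, Nat.div_eq_of_lt hab.2, add_zero]
    refine ⟨hdiv ▸ hab.1, ?_⟩
    rw [hdiv, ← heq]
    rw [Nat.mul_add_mod, Nat.mod_eq_of_lt hab.2]
  have hcast : ∀ i : Fin (h - 1), (i : ℕ) < h := fun i => lt_of_lt_of_le i.2 (Nat.sub_le h 1)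
  set Φ : (Fin h → ℕ) → (Fin (h - 1) → Fin m) × Equiv.Perm (Fin h) :=
    fun f => (fun i => ⟨f ⟨i, hcast i⟩ % m, Nat.mod_lt _ hm0⟩,
      Tuple.sort (fun i => f i / m)) with hΦ
  set L : Fin h := ⟨h - 1, by omega⟩ with hL
  have hinj : Set.InjOn Φ F := by
    intro f hf g hg heq
    rw [Finset.mem_coe] at hf hg
    have hfm := hf; have hgm := hg
    rw [hF, Finset.mem_filter] at hfm hgm
    have hkf : ∑ i, f i = k := hfm.2
    have hkg : ∑ i, g i = k := hgm.2
    -- b-parts agree on indices below h-1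
    have hb1 : ∀ j : Fin h, (j : ℕ) < h - 1 → f j % m = g j % m := by
      intro j hj
      have h1 := congrFun (congrArg Prod.fst heq) ⟨(j : ℕ), hj⟩
      have h2 := congrArg Fin.val h1
      simpa using h2
    have hσ : Tuple.sort (fun i => f i / m) = Tuple.sort (fun i => g i / m) :=
      congrArg Prod.snd heq
    -- sums
    have hsumf : k = m * (∑ i, f i / m) + ∑ i, f i % m := by
      rw [← hkf, Finset.mul_sum, ← Finset.sum_add_distrib]
      exact Finset.sum_congr rfl fun i _ => ((hdec f hf i).2)
    have hsumg : k = m * (∑ i, g i / m) + ∑ i, g i % m := by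
      rw [← hkg, Finset.mul_sum, ← Finset.sum_add_distrib]
      exact Finset.sum_congr rfl fun i _ => ((hdec g hg i).2)
    have herase : ∑ j ∈ Finset.univ.erase L, f j % m
        = ∑ j ∈ Finset.univ.erase L, g j % m := by
      refine Finset.sum_congr rfl fun j hj => ?_
      have hjL : j ≠ L := (Finset.mem_erase.mp hj).1
      have hjlt : (j : ℕ) < h - 1 := by
        have := j.2
        rcases Nat.lt_or_ge (j : ℕ) (h - 1) with h' | h'
        · exact h'
        · exact absurd (Fin.ext (by simp [hL]; omega)) hjL
      exact hb1 j hjlt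
    have hsplitf : ∑ i, f i % m = (∑ j ∈ Finset.univ.erase L, f j % m) + f L % m :=
      (Finset.sum_erase_add _ _ (Finset.mem_univ L)).symm
    have hsplitg : ∑ i, g i % m = (∑ j ∈ Finset.univ.erase L, g j % m) + g L % m :=
      (Finset.sum_erase_add _ _ (Finset.mem_univ L)).symm
    have heq2 : m * (∑ i, f i / m) + f L % m = m * (∑ i, g i / m) + g L % m := by
      omega
    have hTf : (m * (∑ i, f i / m) + f L % m) / m = ∑ i, f i / m := by
      rw [Nat.mul_add_div hm0, Nat.div_eq_of_lt (Nat.mod_lt _ hm0), add_zero]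
    have hTg : (m * (∑ i, g i / m) + g L % m) / m = ∑ i, g i / m := by
      rw [Nat.mul_add_div hm0, Nat.div_eq_of_lt (Nat.mod_lt _ hm0), add_zero]
    have hT : ∑ i, f i / m = ∑ i, g i / m := by rw [← hTf, ← hTg, heq2]
    have hbL : f L % m = g L % m := by
      have hmul : m * (∑ i, f i / m) = m * (∑ i, g i / m) := by rw [hT]
      omega
    -- a-parts: equal multisets
    have hmeq : (↑(List.ofFn fun i => f i / m) : Multiset ℕ)
        = ↑(List.ofFn fun i => g i / m) := by
      apply hBh
      · simp
      · simp
      · intro x hx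
        rw [Multiset.mem_coe, List.mem_ofFn] at hx
        obtain ⟨i, rfl⟩ := hx
        exact (hdec f hf i).1
      · intro x hx
        rw [Multiset.mem_coe, List.mem_ofFn] at hx
        obtain ⟨i, rfl⟩ := hx
        exact (hdec g hg i).1
      · simpa [List.sum_ofFn] using hT
    have hperm : List.Perm (List.ofFn (fun i => f i / m)) (List.ofFn (fun i => g i / m)) :=
      Multiset.coe_eq_coe.mp hmeq
    have hsorted : (fun i => f i / m) ∘ Tuple.sort (fun i => f i / m)
        = (fun i => g i / m) ∘ Tuple.sort (fun i => g i / m) := by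
      apply List.ofFn_injective
      refine List.Perm.eq_of_sortedLE
        (Tuple.monotone_sort _).sortedLE_ofFn (Tuple.monotone_sort _).sortedLE_ofFn ?_
      exact ((Tuple.sort _).ofFn_comp_perm _).trans
        (hperm.trans ((Tuple.sort _).ofFn_comp_perm _).symm)
    have ha : ∀ i, f i / m = g i / m := by
      intro i
      have h2 := congrFun hsorted ((Tuple.sort (fun i => f i / m))⁻¹ i)
      simp only [Function.comp_apply] at h2
      rw [Equiv.Perm.inv_def, Equiv.apply_symm_apply] at h2
      rw [← hσ, Equiv.apply_symm_apply] at h2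
      exact h2
    funext i
    have hfi := (hdec f hf i).2
    have hgi := (hdec g hg i).2
    have hbi : f i % m = g i % m := by
      rcases Nat.lt_or_ge (i : ℕ) (h - 1) with h' | h'
      · exact hb1 i h'
      · have hiL : i = L := Fin.ext (by simp [hL]; omega)
        rw [hiL]; exact hbL
    rw [hfi, hgi, ha i, hbi]
  calc F.card ≤ (Finset.univ : Finset ((Fin (h - 1) → Fin m) × Equiv.Perm (Fin h))).card :=
        Finset.card_le_card_of_injOn Φ (fun f _ => Finset.mem_univ _) hinj
    _ = h.factorial * m ^ (h - 1) := by
        rw [Finset.card_univ]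
        simp [Fintype.card_perm]
        ring
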